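/- arXiv:1801.00745 — 2 statements merged into one kernel-verified Lean document; each statement's English description precedes it below -/
import Mathlib

section
/- Let H be a finite-dimensional complex inner product space, let e₀, e₁, e₂, e₃ ∈ H be unit vectors, and let α, β ∈ [0,1]. Set η₀ := ⟨e₃, e₁⟩ and η₁ := ⟨e₀, e₂⟩, and assume |η₀| < 1 and |η₁| < 1. Define g₀ := (e₂ − η₁·e₀)/√(1−|η₁|²), g₁ := (e₁ − η₀·e₃)/√(1−|η₀|²), e := η₀|0⟩ + √(1−|η₀|²)|1⟩, f := η₁|0⟩ + √(1−|η₁|²)|1⟩, and let V : ℂ²⊗ℂ² → ℂ²⊗H be the linear map determined by V|0,0⟩ = |0⟩⊗e₀, V|1,0⟩ = |1⟩⊗e₃, V|0,1⟩ = |0⟩⊗g₀, V|1,1⟩ = |1⟩⊗g₁. Then for all x, y ∈ ℂ, V(ψ_R) = ψ_C, where ψ_R := |0⟩⊗(x·α·|0⟩ + y·√(1−β²)·f) + |1⟩⊗(x·√(1−α²)·e + y·β·|0⟩) ∈ ℂ²⊗ℂ² and ψ_C := |0⟩⊗(x·α·e₀ + y·√(1−β²)·e₂) + |1⟩⊗(x·√(1−α²)·e₁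 + y·β·e₃) ∈ ℂ²⊗H. -/
open scoped ComplexInnerProductSpace

noncomputable section

abbrev Qubit : Type := EuclideanSpace ℂ (Fin 2)
abbrev TwoQubit : Type := EuclideanSpace ℂ (Fin 2 × Fin 2)

/-- The standard basis `|0⟩`, `|1⟩` of `ℂ²`. -/
def ket (i : Fin 2) : Qubit := EuclideanSpace.single i 1

/-- The tensor product of two qubit states, `x ⊗ y`, realized in
`ℂ² ⊗ ℂ² ≅ EuclideanSpace ℂ (Fin 2 × Fin 2)`. -/
def tensor2 (x y : Qubit) : TwoQubit := WithLp.toLp 2 (fun p => x p.1 * y p.2)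

/-- The tensor product `x ⊗ h` of a qubit state with a vector of `H`, realized in
`ℂ² ⊗ H ≅ PiLp 2 (fun _ : Fin 2 => H)`. -/
def tensorH {H : Type*} [NormedAddCommGroup H] [InnerProductSpace ℂ H]
    (x : Qubit) (h : H) : PiLp 2 (fun _ : Fin 2 => H) := WithLp.toLp 2 (fun i => x i • h)

lemma tensor2_add_right (a b c : Qubit) :
    tensor2 a (b + c) = tensor2 a b + tensor2 a c := by
  ext p; simp [tensor2, mul_add]

lemma tensor2_smul_right (a b : Qubit) (c : ℂ) :
    tensor2 a (c • b) = c • tensor2 a b := by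
  ext p; simp [tensor2]; ring

lemma tensorH_add_right {H : Type*} [NormedAddCommGroup H] [InnerProductSpace ℂ H]
    (a : Qubit) (h h' : H) :
    tensorH a (h + h') = tensorH a h + tensorH a h' := by
  ext i; simp [tensorH, smul_add]

lemma tensorH_smul_right {H : Type*} [NormedAddCommGroup H] [InnerProductSpace ℂ H]
    (a : Qubit) (h : H) (c : ℂ) :
    tensorH a (c • h) = c • tensorH a h := by
  ext i; simp only [tensorH, PiLp.smul_apply, WithLp.ofLp_toLp]; rw [smul_comm]

theorem stmt3 {H : Type*} [NormedAddCommGroup H] [InnerProductSpace ℂ H]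
    [FiniteDimensional ℂ H]
    (e₀ e₁ e₂ e₃ : H) (he₀ : ‖e₀‖ = 1) (he₁ : ‖e₁‖ = 1) (he₂ : ‖e₂‖ = 1) (he₃ : ‖e₃‖ = 1)
    (α β : ℝ) (hα : α ∈ Set.Icc (0 : ℝ) 1) (hβ : β ∈ Set.Icc (0 : ℝ) 1)
    (η₀ η₁ : ℂ) (hη₀def : η₀ = ⟪e₃, e₁⟫) (hη₁def : η₁ = ⟪e₀, e₂⟫)
    (hη₀ : ‖η₀‖ < 1) (hη₁ : ‖η₁‖ < 1)
    (g₀ g₁ : H)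
    (hg₀ : g₀ = (Real.sqrt (1 - ‖η₁‖ ^ 2) : ℂ)⁻¹ • (e₂ - η₁ • e₀))
    (hg₁ : g₁ = (Real.sqrt (1 - ‖η₀‖ ^ 2) : ℂ)⁻¹ • (e₁ - η₀ • e₃))
    (e f : Qubit)
    (he : e = η₀ • ket 0 + (Real.sqrt (1 - ‖η₀‖ ^ 2) : ℂ) • ket 1)
    (hf : f = η₁ • ket 0 + (Real.sqrt (1 - ‖η₁‖ ^ 2) : ℂ) • ket 1)
    (V : TwoQubit →ₗ[ℂ] PiLp 2 (fun _ : Fin 2 => H))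
    (hV00 : V (tensor2 (ket 0) (ket 0)) = tensorH (ket 0) e₀)
    (hV10 : V (tensor2 (ket 1) (ket 0)) = tensorH (ket 1) e₃)
    (hV01 : V (tensor2 (ket 0) (ket 1)) = tensorH (ket 0) g₀)
    (hV11 : V (tensor2 (ket 1) (ket 1)) = tensorH (ket 1) g₁) :
    ∀ x y : ℂ,
      V (tensor2 (ket 0) ((x * (α : ℂ)) • ket 0 + (y * (Real.sqrt (1 - β ^ 2) : ℂ)) • f)
          + tensor2 (ket 1) ((x * (Real.sqrt (1 - α ^ 2) : ℂ)) • e + (y * (β : ℂ)) • ket 0))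
        = tensorH (ket 0) ((x * (α : ℂ)) • e₀ + (y * (Real.sqrt (1 - β ^ 2) : ℂ)) • e₂)
          + tensorH (ket 1) ((x * (Real.sqrt (1 - α ^ 2) : ℂ)) • e₁ + (y * (β : ℂ)) • e₃) := by
  intro x y
  have hs₀ : (0:ℝ) < 1 - ‖η₀‖ ^ 2 := by nlinarith [norm_nonneg η₀]
  have hs₁ : (0:ℝ) < 1 - ‖η₁‖ ^ 2 := by nlinarith [norm_nonneg η₁]
  have hs₀' : ((Real.sqrt (1 - ‖η₀‖ ^ 2) : ℂ)) ≠ 0 := by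
    simpa using (Real.sqrt_pos.2 hs₀).ne'
  have hs₁' : ((Real.sqrt (1 - ‖η₁‖ ^ 2) : ℂ)) ≠ 0 := by
    simpa using (Real.sqrt_pos.2 hs₁).ne'
  have hg₀' : (Real.sqrt (1 - ‖η₁‖ ^ 2) : ℂ) • g₀ = e₂ - η₁ • e₀ := by
    rw [hg₀, smul_smul, mul_inv_cancel₀ hs₁', one_smul]
  have hg₁' : (Real.sqrt (1 - ‖η₀‖ ^ 2) : ℂ) • g₁ = e₁ - η₀ • e₃ := by
    rw [hg₁, smul_smul, mul_inv_cancel₀ hs₀', one_smul]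
  have he₂' : e₂ = η₁ • e₀ + (Real.sqrt (1 - ‖η₁‖ ^ 2) : ℂ) • g₀ := by
    rw [hg₀']; abel
  have he₁' : e₁ = η₀ • e₃ + (Real.sqrt (1 - ‖η₀‖ ^ 2) : ℂ) • g₁ := by
    rw [hg₁']; abel
  rw [he, hf, he₂', he₁']
  simp only [tensor2_add_right, tensor2_smul_right, tensorH_add_right, tensorH_smul_right,
    smul_add, smul_smul, map_add, map_smul, hV00, hV10, hV01, hV11]
end
end

section
/- Let v₀, v₁ be linearly independent vectors in a finite-dimensional complex inner product space and let σ := |v₀⟩⟨v₁| + |v₁⟩⟨v₀|. Write ⟨v₀, v₁⟩ = a + b·i with a, b ∈ ℝ. Then λ₊ := a + √(‖v₀‖²·‖v₁‖² − b²) and λ₋ := a − √(‖v₀‖²·‖v₁‖² − b²) are both eigenvalues of σ (in particular, by the Cauchy–Schwarz inequality the quantity under the square root is nonnegative). -/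
open scoped ComplexInnerProductSpace

noncomputable section

/-- The rank-one operator `|u⟩⟨w| : x ↦ ⟨w, x⟩ • u` (inner product conjugate-linear in the
first argument). -/
def outer {H : Type*} [NormedAddCommGroup H] [InnerProductSpace ℂ H] (u w : H) :
    H →ₗ[ℂ] H where
  toFun x := ⟪w, x⟫ • u
  map_add' x y := by simp [inner_add_right, add_smul]
  map_smul' c x := by simp [inner_smul_right, smul_smul]

lemma outer_apply {H : Type*} [NormedAddCommGroup H] [InnerProductSpace ℂ H] (u w x : H) :
    outer u w x = ⟪w, x⟫ • u := rfl

lemma key_eig {H : Type*} [NormedAddCommGroup H] [InnerProductSpace ℂ H]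
    (v₀ v₁ : H) (hli : LinearIndependent ℂ ![v₀, v₁]) (lam : ℂ)
    (h : ((‖v₀‖ : ℂ) ^ 2 * (‖v₁‖ : ℂ) ^ 2) + lam * ⟪v₀, v₁⟫ - ⟪v₀, v₁⟫ * ⟪v₁, v₀⟫
        = lam ^ 2 - lam * ⟪v₁, v₀⟫) :
    Module.End.HasEigenvalue (outer v₀ v₁ + outer v₁ v₀) lam := by
  have hpair := LinearIndependent.pair_iff.mp hli
  have hv₁ : v₁ ≠ 0 := by
    intro hv
    have := (hpair 0 1 (by simp [hv])).2
    exact one_ne_zero this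
  set x : H := ((‖v₁‖ : ℂ) ^ 2) • v₀ + (lam - ⟪v₁, v₀⟫) • v₁ with hx
  have hxne : x ≠ 0 := by
    intro h0
    have := (hpair _ _ h0).1
    have hn : (‖v₁‖ : ℂ) ^ 2 ≠ 0 := by
      simpa using pow_ne_zero 2 (Complex.ofReal_ne_zero.mpr (norm_ne_zero_iff.mpr hv₁))
    exact hn this
  apply Module.End.hasEigenvalue_of_hasEigenvector
    (x := x) ⟨Module.End.mem_eigenspace_iff.mpr ?_, hxne⟩
  have hii : ⟪v₁, v₁⟫ = ((‖v₁‖ : ℂ) ^ 2) := by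
    rw [inner_self_eq_norm_sq_to_K]; norm_cast
  have hjj : ⟪v₀, v₀⟫ = ((‖v₀‖ : ℂ) ^ 2) := by
    rw [inner_self_eq_norm_sq_to_K]; norm_cast
  simp only [LinearMap.add_apply, outer_apply, hx, inner_add_right, inner_smul_right,
    hii, hjj]
  match_scalars
  · ring
  · linear_combination h

theorem stmt7 {H : Type*} [NormedAddCommGroup H] [InnerProductSpace ℂ H]
    [FiniteDimensional ℂ H] (v₀ v₁ : H) (hli : LinearIndependent ℂ ![v₀, v₁])
    (a b : ℝ) (hab : ⟪v₀, v₁⟫ = a + b * Complex.I) :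
    0 ≤ ‖v₀‖ ^ 2 * ‖v₁‖ ^ 2 - b ^ 2 ∧
      Module.End.HasEigenvalue (outer v₀ v₁ + outer v₁ v₀)
        ((a + Real.sqrt (‖v₀‖ ^ 2 * ‖v₁‖ ^ 2 - b ^ 2) : ℝ) : ℂ) ∧
      Module.End.HasEigenvalue (outer v₀ v₁ + outer v₁ v₀)
        ((a - Real.sqrt (‖v₀‖ ^ 2 * ‖v₁‖ ^ 2 - b ^ 2) : ℝ) : ℂ) := by
  have hcs : ‖⟪v₀, v₁⟫‖ ≤ ‖v₀‖ * ‖v₁‖ := norm_inner_le_norm v₀ v₁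
  have habs : ‖⟪v₀, v₁⟫‖ ^ 2 = a ^ 2 + b ^ 2 := by
    rw [hab, Complex.sq_norm, Complex.normSq_apply]
    simp
    ring
  have h0 : 0 ≤ ‖v₀‖ ^ 2 * ‖v₁‖ ^ 2 - b ^ 2 := by
    nlinarith [sq_nonneg a, norm_nonneg (⟪v₀, v₁⟫ : ℂ), norm_nonneg v₀, norm_nonneg v₁]
  refine ⟨h0, ?_, ?_⟩ <;>
  · apply key_eig v₀ v₁ hli
    have hconj : ⟪v₁, v₀⟫ = (a : ℂ) - b * Complex.I := by
      rw [← inner_conj_symm, hab, map_add, map_mul, Complex.conj_ofReal,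
        Complex.conj_ofReal, Complex.conj_I]
      ring
    have hs : ((Real.sqrt (‖v₀‖ ^ 2 * ‖v₁‖ ^ 2 - b ^ 2) : ℝ) : ℂ) ^ 2
        = (‖v₀‖ : ℂ) ^ 2 * (‖v₁‖ : ℂ) ^ 2 - (b : ℂ) ^ 2 := by
      rw [← Complex.ofReal_pow, Real.sq_sqrt h0]
      push_cast
      ring
    rw [hab, hconj]
    push_cast
    linear_combination (-1 : ℂ) * hs + (b : ℂ) ^ 2 * Complex.I_sq
end
end
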